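/- Fix integers n1, n2 ≥ 3, θ = (φ, ρ11, ρ12, ρ21, ρ22) ∈ ℝ^5, indices i ∈ {0,…,n2−1}, j ∈ {0,…,n1−1}, and a sign s ∈ {+1, −1}. Then the real number μ^s_{ij}(θ) = ((a_{ij} + d_{ij}) + s·√((a_{ij} − d_{ij})² + 4|b_{ij}|²))/2 is an eigenvalue of Q̃_{n1,n2}(θ): there exists a nonzero vector u ∈ ℂ^{2n} with Q̃_{n1,n2}(θ)·u = μ^s_{ij}(θ)·u. -/

import Mathlib

open Matrix

/-- Smallest element of the real spectrum of a real (symmetric) matrix. -/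
noncomputable def lamMin {m : Type} [Fintype m] [DecidableEq m] (M : Matrix m m ℝ) : ℝ :=
  sInf (spectrum ℝ M)

/-- Block-Toeplitz block `T_{n1,n2}(x,y,z)`, indexed by pairs `(a,b)` with
`a ∈ Fin n2`, `b ∈ Fin n1`. -/
def Tmat (n1 n2 : ℕ) (x y z : ℝ) :
    Matrix (Fin n2 × Fin n1) (Fin n2 × Fin n1) ℝ := fun p q =>
  if q = p then y
  else if (q.1 = p.1 ∧ (q.2 : ℕ) = (p.2 : ℕ) + 1) ∨ (q.2 = p.2 ∧ (q.1 : ℕ) = (p.1 : ℕ) + 1) then z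
  else if (q.1 = p.1 ∧ (q.2 : ℕ) + 1 = (p.2 : ℕ)) ∨ (q.2 = p.2 ∧ (q.1 : ℕ) + 1 = (p.1 : ℕ)) then x
  else 0

/-- Block-circulant block `C_{n1,n2}(x,y,z)`. -/
def Cmat (n1 n2 : ℕ) (x y z : ℝ) :
    Matrix (Fin n2 × Fin n1) (Fin n2 × Fin n1) ℝ := fun p q =>
  if q = p then y
  else if (q.1 = p.1 ∧ (q.2 : ℕ) = ((p.2 : ℕ) + 1) % n1) ∨
          (q.2 = p.2 ∧ (q.1 : ℕ) = ((p.1 : ℕ) + 1) % n2) then z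
  else if (q.1 = p.1 ∧ ((q.2 : ℕ) + 1) % n1 = (p.2 : ℕ)) ∨
          (q.2 = p.2 ∧ ((q.1 : ℕ) + 1) % n2 = (p.1 : ℕ)) then x
  else 0

/-- The precision matrix `Q_{n1,n2}(θ)`, `θ = (φ, ρ11, ρ12, ρ21, ρ22)`. -/
def Qmat (n1 n2 : ℕ) (φ ρ11 ρ12 ρ21 ρ22 : ℝ) :
    Matrix ((Fin n2 × Fin n1) ⊕ (Fin n2 × Fin n1)) ((Fin n2 × Fin n1) ⊕ (Fin n2 × Fin n1)) ℝ :=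
  Matrix.fromBlocks (Tmat n1 n2 ρ11 1 ρ11) (Tmat n1 n2 ρ21 φ ρ12)
    (Tmat n1 n2 ρ21 φ ρ12)ᵀ (Tmat n1 n2 ρ22 1 ρ22)

/-- The block-circulant (toroidal) approximation `Q̃_{n1,n2}(θ)`. -/
def Qcmat (n1 n2 : ℕ) (φ ρ11 ρ12 ρ21 ρ22 : ℝ) :
    Matrix ((Fin n2 × Fin n1) ⊕ (Fin n2 × Fin n1)) ((Fin n2 × Fin n1) ⊕ (Fin n2 × Fin n1)) ℝ :=
  Matrix.fromBlocks (Cmat n1 n2 ρ11 1 ρ11) (Cmat n1 n2 ρ21 φ ρ12)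
    (Cmat n1 n2 ρ21 φ ρ12)ᵀ (Cmat n1 n2 ρ22 1 ρ22)

lemma valadd {n : ℕ} [NeZero n] (p : Fin n) : ((p+1 : Fin n) : ℕ) = ((p:ℕ)+1) % n := by
  simp [Fin.val_add, Fin.val_one']

lemma modsucc {k n : ℕ} (h : k < n) : (k+1) % n = if k+1 = n then 0 else k+1 := by
  rcases Nat.lt_or_ge (k+1) n with h' | h'
  · rw [Nat.mod_eq_of_lt h', if_neg (by omega)]
  · have he : k + 1 = n := by omega
    rw [if_pos he, he, Nat.mod_self]

lemma fs {n : ℕ} [NeZero n] (p q : Fin n) :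
    (q : ℕ) = ((p : ℕ) + 1) % n ↔ q = p + 1 := by
  rw [Fin.ext_iff, valadd]

lemma fp {n : ℕ} [NeZero n] (p q : Fin n) :
    ((q : ℕ) + 1) % n = (p : ℕ) ↔ q = p - 1 := by
  rw [eq_comm, fs, eq_comm, eq_sub_iff_add_eq, eq_comm]

lemma addone_ne {n : ℕ} [NeZero n] (hn : 3 ≤ n) (p : Fin n) : p + 1 ≠ p := by
  intro h
  have hv := congrArg Fin.val h
  rw [valadd, modsucc p.isLt] at hv
  have := p.isLt
  split at hv <;> omega

lemma subone_ne {n : ℕ} [NeZero n] (hn : 3 ≤ n) (p : Fin n) : p - 1 ≠ p := by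
  intro h
  have h2 := congrArg (· + 1) h
  simp only [sub_add_cancel] at h2
  exact addone_ne hn p h2.symm

lemma addsub_ne {n : ℕ} [NeZero n] (hn : 3 ≤ n) (p : Fin n) : p + 1 ≠ p - 1 := by
  intro h
  have h2 : p + 1 + 1 = p := by rw [h, sub_add_cancel]
  have hv := congrArg Fin.val h2
  rw [valadd, valadd, modsucc p.isLt] at hv
  have := p.isLt
  split at hv
  · rw [Nat.mod_eq_of_lt (by omega)] at hv; omega
  · rw [modsucc (by omega)] at hv; split at hv <;> omega

section core
variable {n1 n2 : ℕ} [NeZero n1] [NeZero n2]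

lemma zcond_iff (p q : Fin n2 × Fin n1) :
    ((q.1 = p.1 ∧ (q.2 : ℕ) = ((p.2 : ℕ) + 1) % n1) ∨
     (q.2 = p.2 ∧ (q.1 : ℕ) = ((p.1 : ℕ) + 1) % n2)) ↔
    (q = (p.1, p.2 + 1) ∨ q = (p.1 + 1, p.2)) := by
  simp only [fs, Prod.ext_iff]
  tauto

lemma xcond_iff (p q : Fin n2 × Fin n1) :
    ((q.1 = p.1 ∧ ((q.2 : ℕ) + 1) % n1 = (p.2 : ℕ)) ∨
     (q.2 = p.2 ∧ ((q.1 : ℕ) + 1) % n2 = (p.1 : ℕ))) ↔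
    (q = (p.1, p.2 - 1) ∨ q = (p.1 - 1, p.2)) := by
  simp only [fp, Prod.ext_iff]
  tauto

lemma Cmat_mulVec (h1 : 3 ≤ n1) (h2 : 3 ≤ n2) (x y z : ℝ)
    (ω1 ω2 : ℂ) (hω1 : ω1 ^ n1 = 1) (hω2 : ω2 ^ n2 = 1) :
    ((Cmat n1 n2 x y z).map (fun t : ℝ => (t:ℂ))) *ᵥ
        (fun p : Fin n2 × Fin n1 => ω2 ^ (p.1:ℕ) * ω1 ^ (p.2:ℕ)) =
      ((y:ℂ) + z * (ω2 + ω1) + x * (ω2⁻¹ + ω1⁻¹)) •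
        (fun p : Fin n2 × Fin n1 => ω2 ^ (p.1:ℕ) * ω1 ^ (p.2:ℕ)) := by
  have hω1ne : ω1 ≠ 0 := by
    intro h; rw [h, zero_pow (by omega)] at hω1; exact zero_ne_one hω1
  have hω2ne : ω2 ≠ 0 := by
    intro h; rw [h, zero_pow (by omega)] at hω2; exact zero_ne_one hω2
  funext p
  -- distinctness facts
  have hA : ((p.1, p.2 + 1) : Fin n2 × Fin n1) ≠ p := by
    intro h; exact addone_ne h1 p.2 (congrArg Prod.snd h)
  have hB : ((p.1 + 1, p.2) : Fin n2 × Fin n1) ≠ p := by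
    intro h; exact addone_ne h2 p.1 (congrArg Prod.fst h)
  have hC : ((p.1, p.2 - 1) : Fin n2 × Fin n1) ≠ p := by
    intro h; exact subone_ne h1 p.2 (congrArg Prod.snd h)
  have hD : ((p.1 - 1, p.2) : Fin n2 × Fin n1) ≠ p := by
    intro h; exact subone_ne h2 p.1 (congrArg Prod.fst h)
  have hAB : ((p.1, p.2 + 1) : Fin n2 × Fin n1) ≠ (p.1 + 1, p.2) := by
    intro h; exact addone_ne h1 p.2 (congrArg Prod.snd h)
  have hAC : ((p.1, p.2 + 1) : Fin n2 × Fin n1) ≠ (p.1, p.2 - 1) := by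
    intro h; exact addsub_ne h1 p.2 (congrArg Prod.snd h)
  have hAD : ((p.1, p.2 + 1) : Fin n2 × Fin n1) ≠ (p.1 - 1, p.2) := by
    intro h; exact addone_ne h1 p.2 (congrArg Prod.snd h)
  have hBC : ((p.1 + 1, p.2) : Fin n2 × Fin n1) ≠ (p.1, p.2 - 1) := by
    intro h; exact addone_ne h2 p.1 (congrArg Prod.fst h)
  have hBD : ((p.1 + 1, p.2) : Fin n2 × Fin n1) ≠ (p.1 - 1, p.2) := by
    intro h; exact addsub_ne h2 p.1 (congrArg Prod.fst h)
  have hCD : ((p.1, p.2 - 1) : Fin n2 × Fin n1) ≠ (p.1 - 1, p.2) := by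
    intro h; exact subone_ne h1 p.2 (congrArg Prod.snd h)
  -- entry values
  have Cp : Cmat n1 n2 x y z p p = y := by simp [Cmat]
  have C1 : Cmat n1 n2 x y z p (p.1, p.2 + 1) = z := by
    unfold Cmat
    rw [if_neg hA, if_pos (Or.inl ⟨rfl, (fs p.2 (p.2+1)).mpr rfl⟩)]
  have C2 : Cmat n1 n2 x y z p (p.1 + 1, p.2) = z := by
    unfold Cmat
    rw [if_neg hB, if_pos (Or.inr ⟨rfl, (fs p.1 (p.1+1)).mpr rfl⟩)]
  have C3 : Cmat n1 n2 x y z p (p.1, p.2 - 1) = x := by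
    unfold Cmat
    rw [if_neg hC, if_neg (by rw [zcond_iff]; rintro (h | h); exacts [hAC h.symm, hBC h.symm]),
      if_pos (Or.inl ⟨rfl, (fp p.2 (p.2-1)).mpr rfl⟩)]
  have C4 : Cmat n1 n2 x y z p (p.1 - 1, p.2) = x := by
    unfold Cmat
    rw [if_neg hD, if_neg (by rw [zcond_iff]; rintro (h | h); exacts [hAD h.symm, hBD h.symm]),
      if_pos (Or.inr ⟨rfl, (fp p.1 (p.1-1)).mpr rfl⟩)]
  -- power values
  have P1 : ω1 ^ (((p.2 + 1 : Fin n1)) : ℕ) = ω1 ^ ((p.2 : ℕ)) * ω1 := by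
    rw [valadd, ← pow_eq_pow_mod _ hω1, pow_succ]
  have P2 : ω2 ^ (((p.1 + 1 : Fin n2)) : ℕ) = ω2 ^ ((p.1 : ℕ)) * ω2 := by
    rw [valadd, ← pow_eq_pow_mod _ hω2, pow_succ]
  have P3 : ω1 ^ (((p.2 - 1 : Fin n1)) : ℕ) = ω1 ^ ((p.2 : ℕ)) * ω1⁻¹ := by
    rw [eq_mul_inv_iff_mul_eq₀ hω1ne, ← pow_succ, pow_eq_pow_mod _ hω1, ← valadd, sub_add_cancel]
  have P4 : ω2 ^ (((p.1 - 1 : Fin n2)) : ℕ) = ω2 ^ ((p.1 : ℕ)) * ω2⁻¹ := by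
    rw [eq_mul_inv_iff_mul_eq₀ hω2ne, ← pow_succ, pow_eq_pow_mod _ hω2, ← valadd, sub_add_cancel]
  -- the sum
  show ∑ q, ((Cmat n1 n2 x y z p q : ℂ)) * (ω2 ^ (q.1:ℕ) * ω1 ^ (q.2:ℕ)) = _
  rw [← Finset.sum_subset
      (Finset.subset_univ
        ({p, (p.1, p.2 + 1), (p.1 + 1, p.2), (p.1, p.2 - 1), (p.1 - 1, p.2)} :
          Finset (Fin n2 × Fin n1)))
      (by
        intro q _ hq
        simp only [Finset.mem_insert, Finset.mem_singleton, not_or] at hq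
        obtain ⟨hq0, hq1, hq2, hq3, hq4⟩ := hq
        have : Cmat n1 n2 x y z p q = 0 := by
          unfold Cmat
          rw [if_neg hq0,
            if_neg (by rw [zcond_iff]; push_neg; exact ⟨hq1, hq2⟩),
            if_neg (by rw [xcond_iff]; push_neg; exact ⟨hq3, hq4⟩)]
        rw [this]; simp)]
  rw [Finset.sum_insert (by
      simp only [Finset.mem_insert, Finset.mem_singleton, not_or]
      exact ⟨fun h => hA h.symm, fun h => hB h.symm, fun h => hC h.symm, fun h => hD h.symm⟩),
    Finset.sum_insert (by
      simp only [Finset.mem_insert, Finset.mem_singleton, not_or]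
      exact ⟨hAB, hAC, hAD⟩),
    Finset.sum_insert (by
      simp only [Finset.mem_insert, Finset.mem_singleton, not_or]
      exact ⟨hBC, hBD⟩),
    Finset.sum_insert (by simp only [Finset.mem_singleton]; exact hCD),
    Finset.sum_singleton]
  simp only [Cp, C1, C2, C3, C4, P1, P2, P3, P4, Pi.smul_apply, smul_eq_mul]
  ring
lemma Cmat_transpose (h1 : 3 ≤ n1) (h2 : 3 ≤ n2) (x y z : ℝ) :
    (Cmat n1 n2 x y z)ᵀ = Cmat n1 n2 z y x := by
  ext p q
  simp only [transpose_apply]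
  unfold Cmat
  simp only [fs, fp, eq_comm (a := p) (b := q)]
  -- conditions now about Fin equalities
  by_cases hqp : q = p
  · subst hqp; simp
  · rw [if_neg hqp, if_neg hqp]
    -- LHS : if p-succ-of-q then z else if p-pred-of-q then x else 0
    by_cases hz : (p.1 = q.1 ∧ p.2 = q.2 + 1) ∨ (p.2 = q.2 ∧ p.1 = q.1 + 1)
    · rw [if_pos hz]
      have hz' : (q.1 = p.1 ∧ q.2 = p.2 - 1) ∨ (q.2 = p.2 ∧ q.1 = p.1 - 1) := by
        rcases hz with ⟨h1', h2'⟩ | ⟨h1', h2'⟩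
        · exact Or.inl ⟨h1'.symm, by rw [h2', add_sub_cancel_right]⟩
        · exact Or.inr ⟨h1'.symm, by rw [h2', add_sub_cancel_right]⟩
      have hnz : ¬((q.1 = p.1 ∧ q.2 = p.2 + 1) ∨ (q.2 = p.2 ∧ q.1 = p.1 + 1)) := by
        rintro (⟨ha, hb⟩ | ⟨ha, hb⟩)
        · rcases hz' with ⟨hc, hd⟩ | ⟨hc, hd⟩
          · rw [hb] at hd; exact addsub_ne h1 p.2 hd
          · rw [hb] at hc; exact addone_ne h1 p.2 hc
        · rcases hz' with ⟨hc, hd⟩ | ⟨hc, hd⟩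
          · rw [hb] at hc; exact addone_ne h2 p.1 hc
          · rw [hb] at hd; exact addsub_ne h2 p.1 hd
      rw [if_neg hnz, if_pos hz']
    · rw [if_neg hz]
      by_cases hx : (p.1 = q.1 ∧ p.2 = q.2 - 1) ∨ (p.2 = q.2 ∧ p.1 = q.1 - 1)
      · rw [if_pos hx]
        have hx' : (q.1 = p.1 ∧ q.2 = p.2 + 1) ∨ (q.2 = p.2 ∧ q.1 = p.1 + 1) := by
          rcases hx with ⟨h1', h2'⟩ | ⟨h1', h2'⟩
          · exact Or.inl ⟨h1'.symm, by rw [h2', sub_add_cancel]⟩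
          · exact Or.inr ⟨h1'.symm, by rw [h2', sub_add_cancel]⟩
        rw [if_pos hx']
      · rw [if_neg hx]
        have hz2 : ¬((q.1 = p.1 ∧ q.2 = p.2 + 1) ∨ (q.2 = p.2 ∧ q.1 = p.1 + 1)) := by
          rintro (⟨ha, hb⟩ | ⟨ha, hb⟩)
          · exact hx (Or.inl ⟨ha.symm, by rw [hb, add_sub_cancel_right]⟩)
          · exact hx (Or.inr ⟨ha.symm, by rw [hb, add_sub_cancel_right]⟩)
        have hx2 : ¬((q.1 = p.1 ∧ q.2 = p.2 - 1) ∨ (q.2 = p.2 ∧ q.1 = p.1 - 1)) := by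
          rintro (⟨ha, hb⟩ | ⟨ha, hb⟩)
          · exact hz (Or.inl ⟨ha.symm, by rw [hb, sub_add_cancel]⟩)
          · exact hz (Or.inr ⟨ha.symm, by rw [hb, sub_add_cancel]⟩)
        rw [if_neg hz2, if_neg hx2]


end core


/-- Each of the two numbers `((a+d) ± √((a−d)² + 4|b|²))/2` obtained from the
`(i,j)`-th 2×2 Fourier block is an eigenvalue of `Q̃_{n1,n2}(θ)`. -/
theorem two_by_two_block_eigenvalue (n1 n2 : ℕ) (h1 : 3 ≤ n1) (h2 : 3 ≤ n2)
    (φ ρ11 ρ12 ρ21 ρ22 : ℝ) (i : Fin n2) (j : Fin n1)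
    (s : ℝ) (hs : s = 1 ∨ s = -1)
    (w : ℂ)
    (hw : w = Complex.exp (2 * Real.pi * Complex.I * ((i : ℕ) : ℂ) / (n2 : ℂ)) +
              Complex.exp (2 * Real.pi * Complex.I * ((j : ℕ) : ℂ) / (n1 : ℂ)))
    (a d : ℝ)
    (ha : a = 1 + 2 * ρ11 * (Real.cos (2 * Real.pi * ((i : ℕ) : ℝ) / (n2 : ℝ)) +
                             Real.cos (2 * Real.pi * ((j : ℕ) : ℝ) / (n1 : ℝ))))
    (hd : d = 1 + 2 * ρ22 * (Real.cos (2 * Real.pi * ((i : ℕ) : ℝ) / (n2 : ℝ)) +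
                             Real.cos (2 * Real.pi * ((j : ℕ) : ℝ) / (n1 : ℝ))))
    (b : ℂ) (hb : b = (φ : ℂ) + (ρ12 : ℂ) * w + (ρ21 : ℂ) * (starRingEnd ℂ) w)
    (μ : ℝ)
    (hμ : μ = ((a + d) + s * Real.sqrt ((a - d) ^ 2 + 4 * ‖b‖ ^ 2)) / 2) :
    ∃ u : (Fin n2 × Fin n1) ⊕ (Fin n2 × Fin n1) → ℂ, u ≠ 0 ∧
      ((Qcmat n1 n2 φ ρ11 ρ12 ρ21 ρ22).map (fun t : ℝ => (t : ℂ))) *ᵥ u = (μ : ℂ) • u := by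

  haveI : NeZero n1 := ⟨by omega⟩
  haveI : NeZero n2 := ⟨by omega⟩
  have hn1 : ((n1 : ℝ)) ≠ 0 := by positivity
  have hn2 : ((n2 : ℝ)) ≠ 0 := by positivity
  have hn1c : ((n1 : ℂ)) ≠ 0 := by exact_mod_cast Nat.cast_ne_zero.mpr (by omega)
  have hn2c : ((n2 : ℂ)) ≠ 0 := by exact_mod_cast Nat.cast_ne_zero.mpr (by omega)
  set r2 : ℝ := 2 * Real.pi * ((i : ℕ) : ℝ) / (n2 : ℝ) with hr2
  set r1 : ℝ := 2 * Real.pi * ((j : ℕ) : ℝ) / (n1 : ℝ) with hr1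
  have hz2 : (2 * (Real.pi:ℂ) * Complex.I * ((i : ℕ) : ℂ) / (n2 : ℂ)) = (r2 : ℂ) * Complex.I := by
    rw [hr2]; push_cast; ring
  have hz1 : (2 * (Real.pi:ℂ) * Complex.I * ((j : ℕ) : ℂ) / (n1 : ℂ)) = (r1 : ℂ) * Complex.I := by
    rw [hr1]; push_cast; ring
  set ω2 : ℂ := Complex.exp ((r2 : ℂ) * Complex.I) with hω2def
  set ω1 : ℂ := Complex.exp ((r1 : ℂ) * Complex.I) with hω1def
  have hω2pow : ω2 ^ n2 = 1 := by
    rw [hω2def, ← Complex.exp_nat_mul]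
    have : ((n2:ℂ)) * ((r2:ℂ) * Complex.I) = ((i:ℕ):ℂ) * (2 * (Real.pi:ℂ) * Complex.I) := by
      rw [← hz2]; field_simp
    rw [this, Complex.exp_nat_mul, Complex.exp_two_pi_mul_I, one_pow]
  have hω1pow : ω1 ^ n1 = 1 := by
    rw [hω1def, ← Complex.exp_nat_mul]
    have : ((n1:ℂ)) * ((r1:ℂ) * Complex.I) = ((j:ℕ):ℂ) * (2 * (Real.pi:ℂ) * Complex.I) := by
      rw [← hz1]; field_simp
    rw [this, Complex.exp_nat_mul, Complex.exp_two_pi_mul_I, one_pow]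
  have hconj2 : (starRingEnd ℂ) ω2 = ω2⁻¹ := by
    rw [hω2def, ← Complex.exp_conj, ← Complex.exp_neg]
    congr 1
    simp [_root_.map_mul, Complex.conj_ofReal, Complex.conj_I]
  have hconj1 : (starRingEnd ℂ) ω1 = ω1⁻¹ := by
    rw [hω1def, ← Complex.exp_conj, ← Complex.exp_neg]
    congr 1
    simp [_root_.map_mul, Complex.conj_ofReal, Complex.conj_I]
  have hsum2 : ω2 + ω2⁻¹ = ((2 * Real.cos r2 : ℝ) : ℂ) := by
    rw [← hconj2, Complex.add_conj, hω2def, Complex.exp_ofReal_mul_I_re]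
  have hsum1 : ω1 + ω1⁻¹ = ((2 * Real.cos r1 : ℝ) : ℂ) := by
    rw [← hconj1, Complex.add_conj, hω1def, Complex.exp_ofReal_mul_I_re]
  have hsum2' : ω2 + ω2⁻¹ = 2 * Complex.cos ((r2 : ℝ) : ℂ) := by
    rw [hsum2]; push_cast; ring
  have hsum1' : ω1 + ω1⁻¹ = 2 * Complex.cos ((r1 : ℝ) : ℂ) := by
    rw [hsum1]; push_cast; ring
  have hww : w = ω2 + ω1 := by rw [hw, hω2def, hω1def, hz2, hz1]
  have hcw : (starRingEnd ℂ) w = ω2⁻¹ + ω1⁻¹ := by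
    rw [hww, map_add, hconj2, hconj1]
  set v : (Fin n2 × Fin n1) → ℂ := fun p => ω2 ^ ((p.1:ℕ)) * ω1 ^ ((p.2:ℕ)) with hv
  -- mulVec facts
  have hMA : ((Cmat n1 n2 ρ11 1 ρ11).map (fun t : ℝ => (t:ℂ))) *ᵥ v = ((a:ℝ):ℂ) • v := by
    rw [hv, Cmat_mulVec h1 h2 ρ11 1 ρ11 ω1 ω2 hω1pow hω2pow]
    congr 1
    rw [ha]; push_cast
    linear_combination (ρ11 : ℂ) * hsum2' + (ρ11 : ℂ) * hsum1'
  have hMD : ((Cmat n1 n2 ρ22 1 ρ22).map (fun t : ℝ => (t:ℂ))) *ᵥ v = ((d:ℝ):ℂ) • v := by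
    rw [hv, Cmat_mulVec h1 h2 ρ22 1 ρ22 ω1 ω2 hω1pow hω2pow]
    congr 1
    rw [hd]; push_cast
    linear_combination (ρ22 : ℂ) * hsum2' + (ρ22 : ℂ) * hsum1'
  have hMB : ((Cmat n1 n2 ρ21 φ ρ12).map (fun t : ℝ => (t:ℂ))) *ᵥ v = b • v := by
    rw [hv, Cmat_mulVec h1 h2 ρ21 φ ρ12 ω1 ω2 hω1pow hω2pow]
    congr 1
    rw [hb, hcw, hww]
  have hcb : (starRingEnd ℂ) b = (φ:ℂ) + (ρ21:ℂ) * (ω2 + ω1) + (ρ12:ℂ) * (ω2⁻¹ + ω1⁻¹) := by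
    rw [hb, map_add, map_add, _root_.map_mul, _root_.map_mul, Complex.conj_ofReal,
      Complex.conj_ofReal, Complex.conj_ofReal, Complex.conj_conj, hcw, hww]
    ring
  have hMBt : (((Cmat n1 n2 ρ21 φ ρ12)ᵀ).map (fun t : ℝ => (t:ℂ))) *ᵥ v =
      ((starRingEnd ℂ) b) • v := by
    rw [Cmat_transpose h1 h2, hv, Cmat_mulVec h1 h2 ρ12 φ ρ21 ω1 ω2 hω1pow hω2pow]
    congr 1
    rw [hcb]
  -- scalar quadratic
  have hD : (0:ℝ) ≤ (a - d) ^ 2 + 4 * ‖b‖ ^ 2 := by positivity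
  have hs2 : s ^ 2 = 1 := by rcases hs with h | h <;> rw [h] <;> norm_num
  have hlin : 2 * μ - (a + d) = s * Real.sqrt ((a - d) ^ 2 + 4 * ‖b‖ ^ 2) := by
    rw [hμ]; ring
  have hsq : (2 * μ - (a + d)) ^ 2 = (a - d) ^ 2 + 4 * ‖b‖ ^ 2 := by
    rw [hlin, mul_pow, hs2, one_mul, Real.sq_sqrt hD]
  have hquad : (μ - a) * (μ - d) = ‖b‖ ^ 2 := by linear_combination hsq / 4
  -- reduce to 2x2 eigenvector
  suffices H : ∀ α β : ℂ, (α ≠ 0 ∨ β ≠ 0) →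
      ((a:ℝ):ℂ) * α + b * β = ((μ:ℝ):ℂ) * α →
      (starRingEnd ℂ) b * α + ((d:ℝ):ℂ) * β = ((μ:ℝ):ℂ) * β →
      ∃ u : (Fin n2 × Fin n1) ⊕ (Fin n2 × Fin n1) → ℂ, u ≠ 0 ∧
        ((Qcmat n1 n2 φ ρ11 ρ12 ρ21 ρ22).map (fun t : ℝ => (t : ℂ))) *ᵥ u = ((μ:ℝ):ℂ) • u by
    by_cases hμd : μ = d
    · have hb0 : b = 0 := by
        have : ‖b‖ ^ 2 = 0 := by rw [← hquad, hμd]; ring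
        have : ‖b‖ = 0 := by nlinarith [norm_nonneg b]
        exact norm_eq_zero.mp this
      refine H 0 1 (Or.inr one_ne_zero) ?_ ?_
      · rw [hb0]; ring
      · rw [hb0, hμd]; simp
    · refine H (((μ:ℝ):ℂ) - ((d:ℝ):ℂ)) ((starRingEnd ℂ) b) ?_ ?_ ?_
      · left
        rw [sub_ne_zero]
        exact_mod_cast hμd
      · have hr : a * (μ - d) + ‖b‖ ^ 2 = μ * (μ - d) := by linear_combination -hquad
        calc ((a:ℝ):ℂ) * (((μ:ℝ):ℂ) - ((d:ℝ):ℂ)) + b * (starRingEnd ℂ) b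
            = ((a:ℝ):ℂ) * (((μ:ℝ):ℂ) - ((d:ℝ):ℂ)) + ((‖b‖ ^ 2 : ℝ) : ℂ) := by
              rw [Complex.mul_conj, Complex.sq_norm]
          _ = ((μ:ℝ):ℂ) * (((μ:ℝ):ℂ) - ((d:ℝ):ℂ)) := by
              push_cast
              exact_mod_cast congrArg (fun t : ℝ => (t : ℂ)) hr
      · ring
  -- prove H
  intro α β hne E1 E2
  refine ⟨Sum.elim (α • v) (β • v), ?_, ?_⟩
  · intro h
    have hv0 : v ((0 : Fin n2), (0 : Fin n1)) = 1 := by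
      rw [hv]; simp
    rcases hne with hα | hβ
    · have h' := congrFun h (Sum.inl ((0 : Fin n2), (0 : Fin n1)))
      simp only [Sum.elim_inl, Pi.smul_apply, smul_eq_mul, Pi.zero_apply, hv0, mul_one] at h'
      exact hα h'
    · have h' := congrFun h (Sum.inr ((0 : Fin n2), (0 : Fin n1)))
      simp only [Sum.elim_inr, Pi.smul_apply, smul_eq_mul, Pi.zero_apply, hv0, mul_one] at h'
      exact hβ h'
  · rw [Qcmat, Matrix.fromBlocks_map, Matrix.fromBlocks_mulVec,
      Sum.elim_comp_inl, Sum.elim_comp_inr, Matrix.mulVec_smul, Matrix.mulVec_smul,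
      Matrix.mulVec_smul, Matrix.mulVec_smul, hMA, hMB, hMBt, hMD]
    funext q
    rcases q with q | q
    · simp only [Sum.elim_inl, Pi.add_apply, Pi.smul_apply, smul_eq_mul]
      linear_combination v q * E1
    · simp only [Sum.elim_inr, Pi.add_apply, Pi.smul_apply, smul_eq_mul]
      linear_combination v q * E2
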